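/- arXiv:1805.09280 — 2 statements merged into one kernel-verified Lean document; each statement's English description precedes it below -/
import Mathlib

section
/- Theorem 3.3 (algebraic formula for Model 3, substitution form): For every (i,j,k) ∈ ℤ³, one has Z₃(i,j,k) = X'_{r(i,j,k)} · (A')^{α(i,j,k)} (B')^{β(i,j,k)} (C')^{γ(i,j,k)} (D')^{δ(i,j,k)} (E')^{ε(i,j,k)} in F; that is, the Model 3 closed formula Z₃(i,j,k) equals the Model 1 closed formula of Theorem 3.1 with x₁ replaced throughout by Y₁' = (x₁x₂x₆+x₃x₆²+x₃x₄x₅)/(x₁x₄), x₄ replaced throughout by Y₄' = (x₁x₂+x₃x₆)/x₄, and x₂,x₃,x₅,x₆ left unchanged. -/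
noncomputable section

open MvPolynomial

abbrev F : Type := FractionRing (MvPolynomial (Fin 6) ℚ)

/-- The images of the six indeterminates in the field `F = ℚ(x₁,…,x₆)`. -/
def xv (t : Fin 6) : F := algebraMap (MvPolynomial (Fin 6) ℚ) F (X t)

def x1 : F := xv 0
def x2 : F := xv 1
def x3 : F := xv 2
def x4 : F := xv 3
def x5 : F := xv 4
def x6 : F := xv 5

/-- Chooses among six field elements according to the residue of `2(i-j)+3k` mod 6:
residues 5,2,4,1,3,0 select the 1st,…,6th element respectively. -/
def pick (v1 v2 v3 v4 v5 v6 : F) (i j k : ℤ) : F :=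
  if (2*(i-j)+3*k) % 6 = 5 then v1
  else if (2*(i-j)+3*k) % 6 = 2 then v2
  else if (2*(i-j)+3*k) % 6 = 4 then v3
  else if (2*(i-j)+3*k) % 6 = 1 then v4
  else if (2*(i-j)+3*k) % 6 = 3 then v5
  else v6

/-- α(i,j,k) = ⌊(P+i+2j)/3⌋ with P = i²+ij+j²+1. -/
def expA (i j : ℤ) : ℤ := Int.fdiv ((i^2+i*j+j^2+1) + i + 2*j) 3
/-- β(i,j,k) = ⌊(P+2i+j)/3⌋. -/
def expB (i j : ℤ) : ℤ := Int.fdiv ((i^2+i*j+j^2+1) + 2*i + j) 3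
/-- γ(i,j,k) = ⌊P/3⌋. -/
def expC (i j : ℤ) : ℤ := Int.fdiv (i^2+i*j+j^2+1) 3
/-- δ(i,j,k) = ⌊(k−1)²/4⌋. -/
def expD (k : ℤ) : ℤ := Int.fdiv ((k-1)^2) 4
/-- ε(i,j,k) = ⌊k²/4⌋. -/
def expE (k : ℤ) : ℤ := Int.fdiv (k^2) 4

def Y1' : F := (x1*x2*x6 + x3*x6^2 + x3*x4*x5) / (x1*x4)
def Y4' : F := (x1*x2 + x3*x6) / x4

def A3 : F := x1 / x2
def B3 : F := (x4*x5 + x6^2) / (x1*x3)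
def C3 : F := (x1^2*x2^2 + 2*x1*x2*x3*x6 + x3^2*x6^2 + x3^2*x4*x5) / (x1*x4*x5*x6)
def D3 : F := x4 / x5
def E3 : F := (x1^2*x2^2*x6^2 + 2*x1*x2*x3*x6^3 + x3^2*x6^4 + x1^2*x2^2*x4*x5
    + 3*x1*x2*x3*x4*x5*x6 + 2*x3^2*x4*x5*x6^2 + x3^2*x4^2*x5^2) / (x1*x2*x3*x4^2*x6)

/-- The Model 3 closed formula Z₃(i,j,k) of Theorem 3.3. -/
def Z3 (i j k : ℤ) : F :=
  pick Y1' x2 x3 Y4' x5 x6 i j k *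
    A3 ^ expA i j * B3 ^ expB i j * C3 ^ expC i j * D3 ^ expD k * E3 ^ expE k

-- The Model 1 coefficients of Theorem 3.1 with x₁ ↦ Y₁', x₄ ↦ Y₄'.
def A' : F := (x3*x5 + Y4'*x6) / (Y1'*x2)
def B' : F := (Y1'*x6 + x2*x5) / (x3*Y4')
def C' : F := (Y1'*x3 + x2*Y4') / (x5*x6)
def D' : F := (Y1'*x3*x6 + x2*x3*x5 + x2*Y4'*x6) / (Y1'*Y4'*x5)
def E' : F := (x2*Y4'*x5 + Y1'*x3*x5 + Y1'*Y4'*x6) / (x2*x3*x6)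


lemma alg_ne (p : MvPolynomial (Fin 6) ℚ)
    (h : MvPolynomial.eval (fun _ => (1:ℚ)) p ≠ 0) :
    algebraMap (MvPolynomial (Fin 6) ℚ) F p ≠ 0 := by
  intro h0
  have hp : p = 0 := (IsFractionRing.to_map_eq_zero_iff).mp h0
  exact h (by simp [hp])

lemma xv_ne (t : Fin 6) : xv t ≠ 0 :=
  alg_ne (X t) (by simp)

lemma hx1 : x1 ≠ 0 := xv_ne 0
lemma hx2 : x2 ≠ 0 := xv_ne 1
lemma hx3 : x3 ≠ 0 := xv_ne 2
lemma hx4 : x4 ≠ 0 := xv_ne 3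
lemma hx5 : x5 ≠ 0 := xv_ne 4
lemma hx6 : x6 ≠ 0 := xv_ne 5

lemma hnum1 : x1*x2*x6 + x3*x6^2 + x3*x4*x5 ≠ 0 := by
  have := alg_ne (X 0*X 1*X 5 + X 2*X 5^2 + X 2*X 3*X 4) (by simp; norm_num)
  simpa [x1, x2, x3, x4, x5, x6, xv, map_add, map_mul, map_pow] using this

lemma hnum4 : x1*x2 + x3*x6 ≠ 0 := by
  have := alg_ne (X 0*X 1 + X 2*X 5) (by simp)
  simpa [x1, x2, x3, x4, x5, x6, xv, map_add, map_mul] using this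

lemma hY1 : Y1' ≠ 0 := by
  unfold Y1'
  exact div_ne_zero hnum1 (mul_ne_zero hx1 hx4)

lemma hY4 : Y4' ≠ 0 := by
  unfold Y4'
  exact div_ne_zero hnum4 hx4

lemma hAA : A3 = A' := by
  unfold A3 A' Y1' Y4'
  field_simp [hx1, hx2, hx3, hx4, hx5, hx6, hnum1, hnum4]
  rw [eq_div_iff (by convert hnum1 using 1; ring)]
  ring

lemma hBB : B3 = B' := by
  unfold B3 B' Y1' Y4'
  field_simp [hx1, hx2, hx3, hx4, hx5, hx6, hnum1, hnum4]
  rw [eq_div_iff (by convert hnum4 using 1; ring)]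
  ring

lemma hCC : C3 = C' := by
  unfold C3 C' Y1' Y4'
  field_simp [hx1, hx2, hx3, hx4, hx5, hx6, hnum1, hnum4]
  ring

lemma hDD : D3 = D' := by
  unfold D3 D' Y1' Y4'
  field_simp [hx1, hx2, hx3, hx4, hx5, hx6, hnum1, hnum4]
  rw [eq_div_iff (mul_ne_zero (by convert hnum4 using 1; ring) (by convert hnum1 using 1; ring))]
  ring

lemma hEE : E3 = E' := by
  rw [E', E3, div_eq_div_iff
    (by exact mul_ne_zero (mul_ne_zero (mul_ne_zero (mul_ne_zero hx1 hx2) hx3) (pow_ne_zero 2 hx4)) hx6)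
    (mul_ne_zero (mul_ne_zero hx2 hx3) hx6)]
  unfold Y1' Y4'
  field_simp [hx1, hx4]
  ring

/-- Theorem 3.3 (algebraic formula for Model 3, substitution form). -/
theorem model3_substitution_form (i j k : ℤ) :
    Z3 i j k =
      pick Y1' x2 x3 Y4' x5 x6 i j k *
        A' ^ expA i j * B' ^ expB i j * C' ^ expC i j * D' ^ expD k * E' ^ expE k := by
  rw [Z3, hAA, hBB, hCC, hDD, hEE]
end
end

section
/- Closed forms for the Kenyon–Pemantle integer sequences (Remark 8.2): Suppose 𝐀, 𝐁 : ℕ → ℚ satisfy 𝐀(0) = 𝐀(1) = 𝐀(2) = 𝐁(0) = 1 and, for every n ≥ 1, the (denominator-cleared) recurrences 𝐁(n)·𝐀(n−1)·𝐁(n−1) = 𝐀(n)³ + 𝐀(n−1)𝐀(n)𝐀(n+1) + 𝐁(n−1)³ and 𝐀(n+2)·𝐀(n−1)²·𝐁(n−1)³ = 𝐁(n−1)⁶ + 2𝐀(n)³𝐁(n−1)³ + 3𝐀(n−1)𝐀(n)𝐀(n+1)𝐁(n−1)³ + (𝐀(n−1)𝐀(n+1) + 𝐀(n)²)³. Then for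 every N ≥ 0: 𝐀(2N+1) = 14^{N²}, 𝐀(2N+2) = 14^{N(N+1)}, 𝐁(2N) = 14^{N²}, and 𝐁(2N+1) = 3·14^{N(N+1)}. In particular 𝐀(2N+1) = 𝐁(2N) for all N ≥ 0, and all values 𝐀(n), 𝐁(n) are positive integers. -/
/-- Closed forms for the Kenyon–Pemantle integer sequences (Remark 8.2). -/
theorem kenyon_pemantle_closed_forms (A B : ℕ → ℚ)
    (hA0 : A 0 = 1) (hA1 : A 1 = 1) (hA2 : A 2 = 1) (hB0 : B 0 = 1)
    (hB : ∀ n : ℕ, 1 ≤ n →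
      B n * A (n-1) * B (n-1) = A n ^ 3 + A (n-1) * A n * A (n+1) + B (n-1) ^ 3)
    (hA : ∀ n : ℕ, 1 ≤ n →
      A (n+2) * A (n-1) ^ 2 * B (n-1) ^ 3 =
        B (n-1) ^ 6 + 2 * A n ^ 3 * B (n-1) ^ 3
          + 3 * A (n-1) * A n * A (n+1) * B (n-1) ^ 3
          + (A (n-1) * A (n+1) + A n ^ 2) ^ 3) :
    (∀ N : ℕ, A (2*N+1) = 14 ^ (N^2)
      ∧ A (2*N+2) = 14 ^ (N*(N+1))
      ∧ B (2*N) = 14 ^ (N^2)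
      ∧ B (2*N+1) = 3 * 14 ^ (N*(N+1)))
    ∧ (∀ N : ℕ, A (2*N+1) = B (2*N))
    ∧ (∀ n : ℕ, ∃ a : ℕ, 0 < a ∧ A n = a)
    ∧ (∀ n : ℕ, ∃ b : ℕ, 0 < b ∧ B n = b) := by
  have key : ∀ N : ℕ, A (2*N+1) = 14 ^ (N^2) ∧ A (2*N+2) = 14 ^ (N*(N+1))
      ∧ A (2*N+3) = 14 ^ ((N+1)^2)
      ∧ B (2*N) = 14 ^ (N^2) ∧ B (2*N+1) = 3 * 14 ^ (N*(N+1)) := by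
    intro N
    induction N with
    | zero =>
      have hB1 : B 1 = 3 := by
        have h := hB 1 le_rfl
        norm_num [hA0, hA1, hA2, hB0] at h
        linarith
      have hA3 : A 3 = 14 := by
        have h := hA 1 le_rfl
        norm_num [hA0, hA1, hA2, hB0] at h
        linarith
      norm_num [hA1, hA2, hA3, hB0, hB1]
    | succ N ih =>
      obtain ⟨h1, h2, h3, h4, h5⟩ := ih
      -- B (2N+2) = 14^((N+1)^2)
      have hb2 : B (2*N+2) = 14 ^ ((N+1)^2) := by
        have h := hB (2*N+2) (by omega)
        rw [show 2*N+2-1 = 2*N+1 by omega, show 2*N+2+1 = 2*N+3 by omega] at h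
        rw [h1, h2, h3, h5] at h
        refine mul_right_cancel₀ (b := (14:ℚ)^(N^2) * (3*14^(N*(N+1)))) (by positivity) ?_
        linear_combination h
      -- A (2N+4) = 14^((N+1)*(N+2))
      have ha4 : A (2*N+4) = 14 ^ ((N+1)*(N+2)) := by
        have h := hA (2*N+2) (by omega)
        rw [show 2*N+2-1 = 2*N+1 by omega, show 2*N+2+1 = 2*N+3 by omega,
          show 2*N+2+2 = 2*N+4 by omega] at h
        rw [h1, h2, h3, h5] at h
        refine mul_right_cancel₀
          (b := ((14:ℚ)^(N^2))^2 * ((3:ℚ)*14^(N*(N+1)))^3 ) (by positivity) ?_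
        linear_combination h
      -- B (2N+3) = 3 * 14^((N+1)*(N+2))
      have hb3 : B (2*N+3) = 3 * 14 ^ ((N+1)*(N+2)) := by
        have h := hB (2*N+3) (by omega)
        rw [show 2*N+3-1 = 2*N+2 by omega, show 2*N+3+1 = 2*N+4 by omega] at h
        rw [h2, h3, ha4, hb2] at h
        refine mul_right_cancel₀
          (b := (14:ℚ)^(N*(N+1)) * (14:ℚ)^((N+1)^2)) (by positivity) ?_
        linear_combination h
      -- A (2N+5) = 14^((N+2)^2)
      have ha5 : A (2*N+5) = 14 ^ ((N+2)^2) := by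
        have h := hA (2*N+3) (by omega)
        rw [show 2*N+3-1 = 2*N+2 by omega, show 2*N+3+1 = 2*N+4 by omega,
          show 2*N+3+2 = 2*N+5 by omega] at h
        rw [h2, h3, ha4, hb2] at h
        refine mul_right_cancel₀
          (b := ((14:ℚ)^(N*(N+1)))^2 * ((14:ℚ)^((N+1)^2))^3) (by positivity) ?_
        linear_combination h
      refine ⟨?_, ?_, ?_, ?_, ?_⟩
      · rw [show 2*(N+1)+1 = 2*N+3 by omega]; exact h3
      · rw [show 2*(N+1)+2 = 2*N+4 by omega, show (N+1)*(N+1+1) = (N+1)*(N+2) by ring]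
        exact ha4
      · rw [show 2*(N+1)+3 = 2*N+5 by omega, show (N+1+1)^2 = (N+2)^2 by ring]
        exact ha5
      · rw [show 2*(N+1) = 2*N+2 by omega]; exact hb2
      · rw [show 2*(N+1)+1 = 2*N+3 by omega, show (N+1)*(N+1+1) = (N+1)*(N+2) by ring]
        exact hb3
  refine ⟨fun N => ⟨(key N).1, (key N).2.1, (key N).2.2.2.1, (key N).2.2.2.2⟩,
    fun N => by rw [(key N).1, (key N).2.2.2.1], ?_, ?_⟩
  · intro n
    rcases Nat.even_or_odd n with ⟨k, hk⟩ | ⟨k, hk⟩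
    · match k, hk with
      | 0, hk => exact ⟨1, by norm_num, by rw [show n = 0 by omega, hA0]; norm_num⟩
      | (m+1), hk =>
        refine ⟨14 ^ (m*(m+1)), by positivity, ?_⟩
        rw [show n = 2*m+2 by omega, (key m).2.1]; push_cast; ring
    · refine ⟨14 ^ (k^2), by positivity, ?_⟩
      rw [show n = 2*k+1 by omega, (key k).1]; push_cast; ring
  · intro n
    rcases Nat.even_or_odd n with ⟨k, hk⟩ | ⟨k, hk⟩
    · refine ⟨14 ^ (k^2), by positivity, ?_⟩
      rw [show n = 2*k by omega, (key k).2.2.2.1]; push_cast; ring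
    · refine ⟨3 * 14 ^ (k*(k+1)), by positivity, ?_⟩
      rw [show n = 2*k+1 by omega, (key k).2.2.2.2]; push_cast; ring
end
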